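/- arXiv:1711.02476 — 11 statements merged into one kernel-verified Lean document; each statement's English description precedes it below -/
import Mathlib

section
/- For all finite sets r, s of tokens with r nonempty and every natural number i with |r \ s| ≥ i, the Jaccard similarity satisfies |r ∩ s| / |r ∪ s| ≤ (|r| − i) / |r| (as real numbers, with the cardinalities cast to ℝ; note i ≤ |r| since |r \ s| ≤ |r|). -/
/-- Positional upper bound for Jaccard similarity. -/
theorem jaccard_positional_upper_bound
    {α : Type*} [DecidableEq α] (r s : Finset α) (hr : r.Nonempty) (i : ℕ)
    (hi : i ≤ (r \ s).card) :
    ((r ∩ s).card : ℝ) / ((r ∪ s).card : ℝ) ≤ ((r.card : ℝ) - i) / (r.card : ℝ) := by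
  have h1 : (r ∩ s).card + (r \ s).card = r.card := by
    rw [Finset.card_inter_add_card_sdiff]
  have h2 : (r ∩ s).card + i ≤ r.card := by omega
  have h3 : i ≤ r.card := by omega
  have h4 : r.card ≤ (r ∪ s).card := Finset.card_le_card Finset.subset_union_left
  have hr0 : (0:ℝ) < r.card := by exact_mod_cast hr.card_pos
  apply div_le_div₀
  · have : (i:ℝ) ≤ r.card := by exact_mod_cast h3
    linarith
  · have : ((r ∩ s).card : ℝ) + i ≤ r.card := by exact_mod_cast h2
    linarith
  · exact hr0
  · exact_mod_cast h4
end

section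
/- For all nonempty finite sets r, s of tokens and every natural number i with |r \ s| ≥ i, the Cosine similarity satisfies |r ∩ s| / √(|r| · |s|) ≤ √((|r| − i) / |r|) (as real numbers, with the cardinalities cast to ℝ). -/
/-- Positional upper bound for Cosine similarity. -/
theorem cosine_positional_upper_bound
    {α : Type*} [DecidableEq α] (r s : Finset α) (hr : r.Nonempty) (hs : s.Nonempty)
    (i : ℕ) (hi : i ≤ (r \ s).card) :
    ((r ∩ s).card : ℝ) / Real.sqrt ((r.card : ℝ) * (s.card : ℝ)) ≤
      Real.sqrt (((r.card : ℝ) - i) / (r.card : ℝ)) := by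
  have hc : (r ∩ s).card + (r \ s).card = r.card :=
    Finset.card_inter_add_card_sdiff r s
  have hn : (0:ℝ) < (r.card : ℝ) := by exact_mod_cast hr.card_pos
  have hm : (0:ℝ) < (s.card : ℝ) := by exact_mod_cast hs.card_pos
  set a : ℝ := ((r ∩ s).card : ℝ) with ha_def
  have ha0 : 0 ≤ a := by positivity
  have ha1 : a ≤ (r.card : ℝ) - i := by
    have h : (r ∩ s).card + i ≤ r.card := by omega
    have := (Nat.cast_le (α := ℝ)).2 h
    push_cast at this
    linarith
  have ha2 : a ≤ (s.card : ℝ) := by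
    have h := Finset.card_le_card (Finset.inter_subset_right (s₁ := r) (s₂ := s))
    rw [ha_def]; exact_mod_cast h
  have hprod : (0:ℝ) < (r.card : ℝ) * (s.card : ℝ) := mul_pos hn hm
  rw [Real.le_sqrt (by positivity)]
  have hsq : (a / Real.sqrt ((r.card : ℝ) * (s.card : ℝ)))^2
      = a^2 / ((r.card : ℝ) * (s.card : ℝ)) := by
    rw [div_pow, Real.sq_sqrt hprod.le]
  rw [hsq]
  rw [div_le_div_iff₀ hprod hn]
  have hni : 0 ≤ (r.card : ℝ) - i := le_trans ha0 ha1
  calc a^2 * (r.card:ℝ) = (a * a) * (r.card:ℝ) := by ring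
    _ ≤ (((r.card:ℝ) - i) * (s.card:ℝ)) * (r.card:ℝ) := by
        apply mul_le_mul_of_nonneg_right _ hn.le
        exact mul_le_mul ha1 ha2 ha0 hni
    _ = ((r.card:ℝ) - i) * ((r.card:ℝ) * (s.card:ℝ)) := by ring
  exact div_nonneg (le_trans ha0 ha1) hn.le
end

section
/- For all finite sets r, s of tokens with r nonempty and every natural number i with |r \ s| ≥ i, the Dice similarity satisfies 2·|r ∩ s| / (|r| + |s|) ≤ 2·(|r| − i) / (2·|r| − i) (as real numbers, with the cardinalities cast to ℝ). -/
/-- Positional upper bound for Dice similarity. -/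
theorem dice_positional_upper_bound
    {α : Type*} [DecidableEq α] (r s : Finset α) (hr : r.Nonempty) (i : ℕ)
    (hi : i ≤ (r \ s).card) :
    2 * ((r ∩ s).card : ℝ) / ((r.card : ℝ) + (s.card : ℝ)) ≤
      2 * ((r.card : ℝ) - i) / (2 * (r.card : ℝ) - i) := by
  have hsd : (r \ s).card + (r ∩ s).card = r.card := Finset.card_sdiff_add_card_inter r s
  have hc_le : (r ∩ s).card + i ≤ r.card := by omega
  have hcs : (r ∩ s).card ≤ s.card := Finset.card_le_card (Finset.inter_subset_right)
  have hin : i ≤ r.card := by omega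
  have hrpos : (1:ℕ) ≤ r.card := Finset.card_pos.mpr hr
  have hc_le' : ((r ∩ s).card : ℝ) + i ≤ r.card := by exact_mod_cast hc_le
  have hcs' : ((r ∩ s).card : ℝ) ≤ s.card := by exact_mod_cast hcs
  have hin' : (i : ℝ) ≤ r.card := by exact_mod_cast hin
  have hrpos' : (1:ℝ) ≤ r.card := by exact_mod_cast hrpos
  have hc0 : (0:ℝ) ≤ ((r ∩ s).card : ℝ) := Nat.cast_nonneg _
  have hs0 : (0:ℝ) ≤ (s.card : ℝ) := Nat.cast_nonneg _
  have hd1 : (0:ℝ) < (r.card : ℝ) + s.card := by linarith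
  have hd2 : (0:ℝ) < 2 * (r.card : ℝ) - i := by linarith
  rw [div_le_div_iff₀ hd1 hd2]
  nlinarith [mul_nonneg hc0 hs0]
end

section
/- Let r be a finite set of n tokens given by an injective enumeration a_1, …, a_n of its elements, let 1 ≤ ρ ≤ n, and let s be a finite set of tokens containing none of a_1, …, a_{ρ−1}. Then the Jaccard similarity satisfies |r ∩ s| / |r ∪ s| ≤ (n − ρ + 1) / n. -/
/-- Positional upper bound ub(|r|, ρ) for Jaccard in candidate generation:
if `s` contains none of the first `ρ - 1` tokens of the enumerated set `r`,
then the Jaccard similarity of `r` and `s` is at most `(n - ρ + 1) / n`. -/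
theorem jaccard_lookup_position_upper_bound
    {α : Type*} [DecidableEq α] (n : ℕ) (a : Fin n → α) (ha : Function.Injective a)
    (r : Finset α) (hr : r = Finset.image a Finset.univ)
    (ρ : ℕ) (hρ1 : 1 ≤ ρ) (hρn : ρ ≤ n)
    (s : Finset α) (hs : ∀ j : Fin n, (j : ℕ) < ρ - 1 → a j ∉ s) :
    ((r ∩ s).card : ℝ) / ((r ∪ s).card : ℝ) ≤ ((n : ℝ) - ρ + 1) / (n : ℝ) := by
  have hrcard : r.card = n := by
    rw [hr, Finset.card_image_of_injective _ ha, Finset.card_univ, Fintype.card_fin]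
  set t : Finset α := (Finset.univ.filter (fun j : Fin n => (j : ℕ) < ρ - 1)).image a with ht
  have htcard : t.card = ρ - 1 := by
    rw [ht, Finset.card_image_of_injective _ ha]
    have himg : (Finset.univ.filter (fun j : Fin n => (j : ℕ) < ρ - 1)).image
        (fun j : Fin n => (j : ℕ)) = Finset.range (ρ - 1) := by
      ext k
      simp only [Finset.mem_image, Finset.mem_filter, Finset.mem_univ, true_and,
        Finset.mem_range]
      constructor
      · rintro ⟨j, hj, rfl⟩; exact hj
      · intro hk; exact ⟨⟨k, by omega⟩, hk, rfl⟩
    have := Finset.card_image_of_injective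
      (Finset.univ.filter (fun j : Fin n => (j : ℕ) < ρ - 1)) Fin.val_injective
    rw [himg, Finset.card_range] at this
    omega
  have htsub : t ⊆ r \ s := by
    intro x hx
    rw [ht] at hx
    obtain ⟨j, hj, rfl⟩ := Finset.mem_image.mp hx
    rw [Finset.mem_filter] at hj
    refine Finset.mem_sdiff.mpr ⟨?_, hs j hj.2⟩
    rw [hr]; exact Finset.mem_image_of_mem a (Finset.mem_univ j)
  have hsplit : (r ∩ s).card + (r \ s).card = n := by
    rw [Finset.card_inter_add_card_sdiff, hrcard]
  have hnum : ((r ∩ s).card : ℝ) ≤ (n : ℝ) - ρ + 1 := by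
    have h1 : ρ - 1 ≤ (r \ s).card := htcard ▸ Finset.card_le_card htsub
    have h2 : (r ∩ s).card ≤ n - ρ + 1 := by omega
    calc ((r ∩ s).card : ℝ) ≤ ((n - ρ + 1 : ℕ) : ℝ) := by exact_mod_cast h2
      _ = (n : ℝ) - ρ + 1 := by
          rw [Nat.cast_add, Nat.cast_sub hρn, Nat.cast_one]
  have hden : (n : ℝ) ≤ ((r ∪ s).card : ℝ) := by
    exact_mod_cast hrcard ▸ Finset.card_le_card (Finset.subset_union_left (s₂ := s))
  have hnpos : (0 : ℝ) < n := by exact_mod_cast (by omega : 0 < n)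
  have hρr : (ρ : ℝ) ≤ n := by exact_mod_cast hρn
  exact div_le_div₀ (by linarith) hnum hnpos hden
end

section
/- Define d : ℕ → ℕ → ℕ → ℝ by d(a,b,o) = 2·o / (a + b) (real division, naturals cast to ℝ). Then for all a, b with a + b > 0: (1) d(a,b,0) = 0; (2) d(a,b,o) = d(b,a,o) for all o; (3) for all o ≤ o' ≤ min(a,b), d(a,b,o) ≤ d(a,b,o'); (4) for all b ≤ b' ≤ a, d(a,b,b) ≤ d(a,b',b'); (5) for all o ≤ b ≤ b', d(a,b',o) ≤ d(a,b,o). -/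
/-- The Dice similarity as a function of the set cardinalities and the overlap. -/
noncomputable def diceSim (a b o : ℕ) : ℝ := 2 * (o : ℝ) / ((a : ℝ) + (b : ℝ))

/-- Dice is a well-behaved similarity function (plus antitonicity in set size). -/
theorem dice_well_behaved (a b : ℕ) (hab : 0 < a + b) :
    diceSim a b 0 = 0 ∧
    (∀ o, diceSim a b o = diceSim b a o) ∧
    (∀ o o', o ≤ o' → o' ≤ min a b → diceSim a b o ≤ diceSim a b o') ∧
    (∀ b', b ≤ b' → b' ≤ a → diceSim a b b ≤ diceSim a b' b') ∧
    (∀ b' o, o ≤ b → b ≤ b' → diceSim a b' o ≤ diceSim a b o) := by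
  have hab' : (0 : ℝ) < (a : ℝ) + (b : ℝ) := by
    have : (0 : ℝ) < ((a + b : ℕ) : ℝ) := by exact_mod_cast hab
    push_cast at this; linarith
  refine ⟨by simp [diceSim], fun o => by unfold diceSim; ring, ?_, ?_, ?_⟩
  · intro o o' h _
    have : (o : ℝ) ≤ o' := by exact_mod_cast h
    unfold diceSim
    gcongr
  · intro b' hb hb'
    have hb'' : (b : ℝ) ≤ b' := by exact_mod_cast hb
    have hab2 : (0 : ℝ) < (a : ℝ) + (b' : ℝ) := by
      have : (0:ℝ) ≤ (b':ℝ) - b := by linarith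
      linarith
    unfold diceSim
    rw [div_le_div_iff₀ hab' hab2]
    have ha : (0:ℝ) ≤ (a:ℝ) := Nat.cast_nonneg a
    nlinarith
  · intro b' o ho hb
    have hb'' : (b : ℝ) ≤ b' := by exact_mod_cast hb
    have ho' : (0:ℝ) ≤ (o:ℝ) := Nat.cast_nonneg o
    have hab2 : (0 : ℝ) < (a : ℝ) + (b' : ℝ) := by linarith
    unfold diceSim
    apply div_le_div_of_nonneg_left (by linarith) hab' (by linarith)
end

section
/- For all finite sets r, s of tokens with r ∪ s nonempty and every real τ ≥ 0: |r ∩ s| / |r ∪ s| ≥ τ if and only if |r ∩ s| ≥ (τ / (1 + τ)) · (|r| + |s|) (as real numbers, with the cardinalities cast to ℝ). -/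
/-- Minimum-overlap characterization for the Jaccard similarity:
`overlap(l_r, l_s, τ) = (τ/(1+τ))·(l_r + l_s)`. -/
theorem jaccard_overlap_characterization
    {α : Type*} [DecidableEq α] (r s : Finset α) (hrs : (r ∪ s).Nonempty)
    (τ : ℝ) (hτ : 0 ≤ τ) :
    τ ≤ ((r ∩ s).card : ℝ) / ((r ∪ s).card : ℝ) ↔
      τ / (1 + τ) * ((r.card : ℝ) + (s.card : ℝ)) ≤ ((r ∩ s).card : ℝ) := by
  have hu : 0 < ((r ∪ s).card : ℝ) := by
    exact_mod_cast Finset.card_pos.mpr hrs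
  have h1τ : 0 < 1 + τ := by linarith
  have hsum : (r.card : ℝ) + (s.card : ℝ) = ((r ∪ s).card : ℝ) + ((r ∩ s).card : ℝ) := by
    exact_mod_cast (Finset.card_union_add_card_inter r s).symm
  rw [le_div_iff₀ hu, div_mul_eq_mul_div, div_le_iff₀ h1τ, hsum]
  constructor <;> intro h <;> nlinarith
end

section
/- Let P be a finite set with functions v : P → ℝ and e : P → ℝ, where v is injective, and let k ≥ 1. Suppose every p ∈ P is relevant in P, i.e., for every p ∈ P the cardinality of {q ∈ P : v(q) > v(p) and e(q) ≥ e(p)} is less than k. Then for every t ∈ ℝ, the cardinality of {p ∈ P : e(p) = t} is at most k. -/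
/-- In a minimal stock, at most `k` pairs share any given end time. -/
theorem minimal_stock_end_time_count
    {α : Type*} (P : Finset α) (v e : α → ℝ) (hv : Set.InjOn v ↑P)
    (k : ℕ) (hk : 1 ≤ k)
    (hrel : ∀ p ∈ P, (P.filter (fun q => v p < v q ∧ e p ≤ e q)).card < k) :
    ∀ t : ℝ, (P.filter (fun p => e p = t)).card ≤ k := by
  intro t
  classical
  by_contra h
  push_neg at h
  set S := P.filter (fun p => e p = t) with hS
  have hne : S.Nonempty := Finset.card_pos.mp (by omega)
  obtain ⟨p, hpS, hmin⟩ := S.exists_min_image v hne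
  have hpP : p ∈ P := (Finset.mem_filter.mp hpS).1
  have hpt : e p = t := (Finset.mem_filter.mp hpS).2
  have hsub : S.erase p ⊆ P.filter (fun q => v p < v q ∧ e p ≤ e q) := by
    intro q hq
    have hqne := Finset.ne_of_mem_erase hq
    have hqS := Finset.mem_of_mem_erase hq
    have hqP : q ∈ P := (Finset.mem_filter.mp hqS).1
    have hqt : e q = t := (Finset.mem_filter.mp hqS).2
    refine Finset.mem_filter.mpr ⟨hqP, ?_, by rw [hpt, hqt]⟩
    exact lt_of_le_of_ne (hmin q hqS) (fun hvv => hqne (hv hqP hpP hvv.symm))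
  have := Finset.card_le_card hsub
  have hc : (S.erase p).card = S.card - 1 := Finset.card_erase_of_mem hpS
  have := hrel p hpP
  omega
end

section
/- Let P be a finite set with functions v : P → ℝ and e : P → ℝ, where v is injective, and let k ≥ 1. Suppose every p ∈ P is relevant in P, i.e., for every p ∈ P the cardinality of {q ∈ P : v(q) > v(p) and e(q) ≥ e(p)} is less than k. Then |P| ≤ k · n, where n is the number of distinct values taken by e on P (the cardinality of the image of e). -/
/-- The size of a minimal stock is at most `k` times the number of distinct end times. -/
theorem minimal_stock_size
    {α : Type*} [DecidableEq α] (P : Finset α) (v e : α → ℝ) (hv : Set.InjOn v ↑P)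
    (k : ℕ) (hk : 1 ≤ k)
    (hrel : ∀ p ∈ P, (P.filter (fun q => v p < v q ∧ e p ≤ e q)).card < k) :
    P.card ≤ k * (P.image e).card := by
  rw [Finset.card_eq_sum_card_fiberwise (fun p hp => Finset.mem_image_of_mem e hp),
    mul_comm, ← smul_eq_mul, ← Finset.sum_const]
  apply Finset.sum_le_sum
  intro t ht
  -- fiber at t
  set F := P.filter (fun p => e p = t) with hF
  obtain ⟨p, hpF, hpmin⟩ := F.exists_min_image v (by
    obtain ⟨p, hp, hpe⟩ := Finset.mem_image.mp ht
    exact ⟨p, Finset.mem_filter.mpr ⟨hp, hpe⟩⟩)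
  have hpP : p ∈ P := (Finset.mem_filter.mp hpF).1
  have hpe : e p = t := (Finset.mem_filter.mp hpF).2
  have hsub : F.erase p ⊆ P.filter (fun q => v p < v q ∧ e p ≤ e q) := by
    intro q hq
    obtain ⟨hqne, hqF⟩ := Finset.mem_erase.mp hq
    have hqP : q ∈ P := (Finset.mem_filter.mp hqF).1
    have hqe : e q = t := (Finset.mem_filter.mp hqF).2
    have hle : v p ≤ v q := hpmin q hqF
    have hlt : v p < v q :=
      lt_of_le_of_ne hle (fun h => hqne (hv hqP hpP h.symm))
    exact Finset.mem_filter.mpr ⟨hqP, hlt, by rw [hpe, hqe]⟩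
  have h1 : (F.erase p).card < k := lt_of_le_of_lt (Finset.card_le_card hsub) (hrel p hpP)
  have h2 : F.card ≤ (F.erase p).card + 1 := by
    rw [Finset.card_erase_of_mem hpF]
    omega
  omega
end

section
/- Let P be a finite set with functions v : P → ℝ and e : P → ℝ, where v is injective, and let k ≥ 1. Suppose P is minimal, i.e., for every p ∈ P the cardinality of {q ∈ P : v(q) > v(p) and e(q) ≥ e(p)} is less than k. Let t ∈ ℝ and let m be the cardinality of {p ∈ P : e(p) < t}. If |P| ≥ k + m, then the k-th largest value of v over {p ∈ P : e(p) ≥ t} equals the (k + m)-th largest value of v over all of P. Equivalently: among the k + m − 1 elements of P with the largest v-values, exactly m satisfy e(p) < t, and the element of P with the (k+m)-th largest v-value satisfies e(p) ≥ t. -/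
/-- The `k`-th largest element of a multiset of reals
(the `k`-th entry of the multiset sorted in decreasing order). -/
noncomputable def kthLargest (M : Multiset ℝ) (k : ℕ) : ℝ :=
  (M.sort (· ≥ ·)).getD (k - 1) 0

private lemma countP_getD_of_sorted :
    ∀ (l : List ℝ), l.Pairwise (· > ·) → ∀ k : ℕ, k < l.length →
      l.countP (fun y => l.getD k 0 < y) = k := by
  intro l hl
  induction l with
  | nil => intro k hk; simp at hk
  | cons a tl ih =>
    intro k hk
    cases k with
    | zero =>
      simp only [List.getD_cons_zero, List.countP_cons]
      have h1 : (tl.countP fun y => decide (a < y)) = 0 := by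
        rw [List.countP_eq_zero]
        intro y hy
        have := (List.pairwise_cons.1 hl).1 y hy
        simp [not_lt.2 this.le]
      simp [h1]
    | succ n =>
      have hn : n < tl.length := by simpa using hk
      have hx : tl.getD n 0 ∈ tl := by
        rw [List.getD_eq_getElem _ _ hn]; exact List.getElem_mem _
      have ha : tl.getD n 0 < a := (List.pairwise_cons.1 hl).1 _ hx
      rw [List.getD_cons_succ, List.countP_cons,
        ih (List.pairwise_cons.1 hl).2 n hn]
      rw [List.getD_eq_getElem _ _ hn] at ha
      rw [List.getD_eq_getElem _ _ hn]
      simp [ha]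

private lemma eq_of_countP_eq (M : Multiset ℝ) (hM : M.Nodup)
    {x y : ℝ} (hx : x ∈ M) (hy : y ∈ M)
    (h : M.countP (fun z => x < z) = M.countP (fun z => y < z)) : x = y := by
  by_contra hne
  wlog hxy : x < y generalizing x y
  · exact this hy hx h.symm (Ne.symm hne) ((lt_or_gt_of_ne hne).resolve_left hxy)
  have hnd : (y ::ₘ M.filter (fun z => y < z)).Nodup := by
    refine Multiset.nodup_cons.2 ⟨?_, hM.filter _⟩
    intro hmem
    exact absurd (Multiset.mem_filter.1 hmem).2 (lt_irrefl y)
  have hsub : y ::ₘ M.filter (fun z => y < z) ≤ M.filter (fun z => x < z) := by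
    refine (Multiset.le_iff_subset hnd).2 ?_
    intro z hz
    rcases Multiset.mem_cons.1 hz with rfl | hz
    · exact Multiset.mem_filter.2 ⟨hy, hxy⟩
    · obtain ⟨hzM, hyz⟩ := Multiset.mem_filter.1 hz
      exact Multiset.mem_filter.2 ⟨hzM, hxy.trans hyz⟩
  have hc := Multiset.card_le_card hsub
  simp only [Multiset.card_cons] at hc
  rw [Multiset.countP_eq_card_filter, Multiset.countP_eq_card_filter] at h
  omega

private lemma kthLargest_spec (M : Multiset ℝ) (hM : M.Nodup) (k : ℕ)
    (hk : 1 ≤ k) (hkc : k ≤ Multiset.card M) :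
    kthLargest M k ∈ M ∧ M.countP (fun z => kthLargest M k < z) = k - 1 := by
  set l := M.sort (· ≥ ·) with hl
  have hlen : l.length = Multiset.card M := Multiset.length_sort _
  have hnd : l.Nodup := by
    have : (↑l : Multiset ℝ).Nodup := by rw [hl, Multiset.sort_eq]; exact hM
    exact Multiset.coe_nodup.1 this
  have hpair : l.Pairwise (· > ·) := by
    have hs : l.Pairwise (· ≥ ·) := Multiset.pairwise_sort _ _
    exact (hs.and hnd).imp fun h => lt_of_le_of_ne h.1 h.2.symm
  have hkl : k - 1 < l.length := by omega
  have hmem : kthLargest M k ∈ M := by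
    rw [← Multiset.mem_sort (· ≥ ·)]
    show l.getD (k-1) 0 ∈ l
    rw [List.getD_eq_getElem _ _ hkl]
    exact List.getElem_mem _
  refine ⟨hmem, ?_⟩
  have hMl : M = (l : Multiset ℝ) := (Multiset.sort_eq _ _).symm
  have h2 := countP_getD_of_sorted l hpair (k-1) hkl
  have h3 : Multiset.countP (fun z => kthLargest M k < z) M
      = List.countP (fun b => decide (kthLargest M k < b)) l := by
    rw [hMl]; exact Multiset.coe_countP _ _
  rw [h3]
  exact h2

private lemma kthLargest_eq (M : Multiset ℝ) (hM : M.Nodup) (k : ℕ) (hk : 1 ≤ k)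
    (x : ℝ) (hx : x ∈ M) (hc : M.countP (fun z => x < z) = k - 1) :
    kthLargest M k = x := by
  have hkc : k ≤ Multiset.card M := by
    have hnd : (x ::ₘ M.filter (fun z => x < z)).Nodup := by
      refine Multiset.nodup_cons.2 ⟨?_, hM.filter _⟩
      intro hmem
      exact absurd (Multiset.mem_filter.1 hmem).2 (lt_irrefl x)
    have hsub : x ::ₘ M.filter (fun z => x < z) ≤ M := by
      refine (Multiset.le_iff_subset hnd).2 ?_
      intro z hz
      rcases Multiset.mem_cons.1 hz with rfl | hz
      · exact hx
      · exact (Multiset.mem_filter.1 hz).1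
    have := Multiset.card_le_card hsub
    rw [Multiset.countP_eq_card_filter] at hc
    simp only [Multiset.card_cons] at this
    omega
  obtain ⟨hmem, hcnt⟩ := kthLargest_spec M hM k hk hkc
  exact eq_of_countP_eq M hM hmem hx (by rw [hcnt, hc])

/-- Skyband-boundary lemma: in a minimal stock, the `k`-th most similar pair still
valid at time `t` is the `(k + m)`-th most similar pair overall, where `m` is the
number of pairs ending before `t`. -/
theorem minimal_stock_skyband_alignment
    {α : Type*} (P : Finset α) (v e : α → ℝ) (hv : Set.InjOn v ↑P)
    (k : ℕ) (hk : 1 ≤ k)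
    (hmin : ∀ p ∈ P, (P.filter (fun q => v p < v q ∧ e p ≤ e q)).card < k)
    (t : ℝ) (hcard : k + (P.filter (fun p => e p < t)).card ≤ P.card) :
    kthLargest (Multiset.map v (P.filter (fun p => t ≤ e p)).val) k =
      kthLargest (Multiset.map v P.val) (k + (P.filter (fun p => e p < t)).card) := by
  classical
  set m := (P.filter (fun p => e p < t)).card with hm
  have hvP : ∀ a ∈ P.val, ∀ b ∈ P.val, v a = v b → a = b := fun a ha b hb h => hv ha hb h
  have hVnd : (Multiset.map v P.val).Nodup := P.nodup.map_on hvP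
  have hVcard : Multiset.card (Multiset.map v P.val) = P.card := by
    rw [Multiset.card_map]; rfl
  have hkm : 1 ≤ k + m := by omega
  obtain ⟨hxmem, hxcnt⟩ := kthLargest_spec (Multiset.map v P.val) hVnd (k + m) hkm
    (by rw [hVcard]; exact hcard)
  set x := kthLargest (Multiset.map v P.val) (k + m) with hxdef
  obtain ⟨p₀, hp₀P, hp₀v⟩ := Multiset.mem_map.1 hxmem
  have hp₀ : p₀ ∈ P := hp₀P
  -- translate multiset counts to finset cardinalities
  have hcount_eq : ∀ (S : Finset α) (y : ℝ),
      Multiset.countP (fun z => y < z) (Multiset.map v S.val)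
        = (S.filter (fun q => y < v q)).card := by
    intro S y
    rw [Multiset.countP_map]
    rfl
  have hrank : (P.filter (fun q => x < v q)).card = k + m - 1 := by
    rw [← hcount_eq]; exact hxcnt
  -- rank bound for expired pairs
  have key : ∀ q ∈ P, e q < t → (P.filter (fun r => v q < v r)).card + 2 ≤ k + m := by
    intro q hq hqt
    have hA : (P.filter (fun r => v q < v r ∧ e q ≤ e r)).card < k := hmin q hq
    have hqmem : q ∈ P.filter (fun p => e p < t) := Finset.mem_filter.2 ⟨hq, hqt⟩
    have hB : ((P.filter (fun p => e p < t)).erase q).card = m - 1 := by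
      rw [Finset.card_erase_of_mem hqmem]
    have hm1 : 0 < m := Finset.card_pos.2 ⟨q, hqmem⟩
    have hsub : P.filter (fun r => v q < v r) ⊆
        (P.filter (fun r => v q < v r ∧ e q ≤ e r)) ∪
          ((P.filter (fun p => e p < t)).erase q) := by
      intro r hr
      obtain ⟨hrP, hvr⟩ := Finset.mem_filter.1 hr
      by_cases he : e q ≤ e r
      · exact Finset.mem_union_left _ (Finset.mem_filter.2 ⟨hrP, hvr, he⟩)
      · refine Finset.mem_union_right _
          (Finset.mem_erase.2 ⟨?_, Finset.mem_filter.2 ⟨hrP, ?_⟩⟩)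
        · rintro rfl; exact lt_irrefl _ hvr
        · exact lt_trans (not_le.1 he) hqt
    have hle := (Finset.card_le_card hsub).trans (Finset.card_union_le _ _)
    omega
  -- the (k+m)-th ranked pair is still valid
  have hp₀t : t ≤ e p₀ := by
    by_contra h
    have h' : e p₀ < t := not_le.1 h
    have hkey := key p₀ hp₀ h'
    rw [hp₀v] at hkey
    omega
  -- every expired pair has similarity above x
  have hexp : ∀ q ∈ P, e q < t → x < v q := by
    intro q hq hqt
    rcases lt_trichotomy x (v q) with h | h | h
    · exact h
    · exfalso
      have hqp : q = p₀ := hv hq hp₀ (by rw [hp₀v, ← h])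
      rw [hqp] at hqt
      exact absurd hp₀t (not_le.2 hqt)
    · exfalso
      have hins : insert p₀ (P.filter (fun r => x < v r)) ⊆
          P.filter (fun r => v q < v r) := by
        intro r hr
        rcases Finset.mem_insert.1 hr with rfl | hr
        · exact Finset.mem_filter.2 ⟨hp₀, by rw [hp₀v]; exact h⟩
        · obtain ⟨hrP, hxr⟩ := Finset.mem_filter.1 hr
          exact Finset.mem_filter.2 ⟨hrP, h.trans hxr⟩
      have hnotin : p₀ ∉ P.filter (fun r => x < v r) := by
        intro hmem
        have h2 := (Finset.mem_filter.1 hmem).2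
        rw [hp₀v] at h2
        exact lt_irrefl x h2
      have hcard2 := Finset.card_le_card hins
      rw [Finset.card_insert_of_notMem hnotin, hrank] at hcard2
      have hkey := key q hq hqt
      have hm1 : 0 < m := Finset.card_pos.2 ⟨q, Finset.mem_filter.2 ⟨hq, hqt⟩⟩
      omega
  -- exactly k-1 valid pairs above x
  have hsplit : (P.filter (fun q => x < v q ∧ t ≤ e q)).card = k - 1 := by
    have h1 : P.filter (fun q => x < v q ∧ e q < t) = P.filter (fun q => e q < t) := by
      apply Finset.Subset.antisymm
      · intro q hq
        obtain ⟨hqP, _, h2⟩ := Finset.mem_filter.1 hq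
        exact Finset.mem_filter.2 ⟨hqP, h2⟩
      · intro q hq
        obtain ⟨hqP, h2⟩ := Finset.mem_filter.1 hq
        exact Finset.mem_filter.2 ⟨hqP, hexp q hqP h2, h2⟩
    have e1 : P.filter (fun q => x < v q ∧ t ≤ e q)
        = (P.filter (fun q => x < v q)).filter (fun q => ¬ e q < t) := by
      rw [Finset.filter_filter]
      apply Finset.filter_congr
      intro q _
      simp [not_lt]
    have e2 : P.filter (fun q => x < v q ∧ e q < t)
        = (P.filter (fun q => x < v q)).filter (fun q => e q < t) := by
      rw [Finset.filter_filter]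
    have h2 := Finset.card_filter_add_card_filter_not
      (s := P.filter (fun q => x < v q)) (p := fun q => e q < t)
    rw [← e1, ← e2, h1, hrank] at h2
    omega
  -- conclude on the valid side
  set Q := P.filter (fun p => t ≤ e p) with hQ
  have hQsub : ∀ a ∈ Q.val, a ∈ P := by
    intro a ha
    exact (Finset.mem_filter.1 ha).1
  have hWnd : (Multiset.map v Q.val).Nodup :=
    Q.nodup.map_on (fun a ha b hb h => hv (hQsub a ha) (hQsub b hb) h)
  have hp₀Q : p₀ ∈ Q := Finset.mem_filter.2 ⟨hp₀, hp₀t⟩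
  have hxW : x ∈ Multiset.map v Q.val :=
    Multiset.mem_map.2 ⟨p₀, hp₀Q, hp₀v⟩
  have countW : Multiset.countP (fun z => x < z) (Multiset.map v Q.val) = k - 1 := by
    rw [hcount_eq Q x]
    have hQf : Q.filter (fun q => x < v q) = P.filter (fun q => x < v q ∧ t ≤ e q) := by
      rw [hQ, Finset.filter_filter]
      apply Finset.filter_congr
      intro q _
      exact and_comm
    rw [hQf, hsplit]
  exact kthLargest_eq (Multiset.map v Q.val) hWnd k hk x hxW countW
end

section
/- Let P be a finite set with functions v : P → ℝ and e : P → ℝ, where v is injective, and let k ≥ 1. Call p ∈ P irrelevant in P if the cardinality of {q ∈ P : v(q) > v(p) and e(q) ≥ e(p)} is at least k. Order P by the lexicographic order on (e(p), v(p)), both components ascending (the end-time order E, with ties in end time broken by ascending similarity). Suppose p ∈ P is irrelevant in P and every other irrelevant element of P comes strictly after p in this order, and let u = 1 + |{q ∈ P : (e(q), v(q)) <_lex (e(p), v(p))}| be p's position in the order. Then |{q ∈ P : v(q) > v(p)}| ≥ u + k − 1; that is, p's position in the descending-similarity order of P exceeds u + k − 1. -/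
/-- Cleanup lemma: if `p` is the first irrelevant pair in the end-time order `E`
(ties in end time broken by ascending similarity), at position `u`, then the position
of `p` in the descending-similarity order `S` exceeds `u + k - 1`. -/
theorem first_irrelevant_position
    {α : Type*} (P : Finset α) (v e : α → ℝ) (hv : Set.InjOn v ↑P)
    (k : ℕ) (hk : 1 ≤ k)
    (p : α) (hp : p ∈ P)
    (hirr : k ≤ (P.filter (fun q => v p < v q ∧ e p ≤ e q)).card)
    (hfirst : ∀ q ∈ P, q ≠ p →
      k ≤ (P.filter (fun q' => v q < v q' ∧ e q ≤ e q')).card →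
      (e p < e q ∨ (e p = e q ∧ v p < v q))) :
    (1 + (P.filter (fun q => e q < e p ∨ (e q = e p ∧ v q < v p))).card) + k - 1 ≤
      (P.filter (fun q => v p < v q)).card := by
  classical
  set A := P.filter (fun q => v p < v q ∧ e p ≤ e q) with hA
  set B := P.filter (fun q => e q < e p ∨ (e q = e p ∧ v q < v p)) with hB
  -- every q in B has v p < v q
  have hBv : ∀ q ∈ B, v p < v q := by
    intro q hq
    rw [hB, Finset.mem_filter] at hq
    obtain ⟨hqP, hqlex⟩ := hq
    by_contra hle
    push_neg at hle
    have hqp : q ≠ p := by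
      rintro rfl
      rcases hqlex with h | ⟨_, h⟩ <;> exact lt_irrefl _ h
    have hvne : v q ≠ v p := fun h => hqp (hv hqP hp h)
    have hvlt : v q < v p := lt_of_le_of_ne hle hvne
    have hep : e q ≤ e p := by
      rcases hqlex with h | ⟨h, _⟩ <;> linarith
    -- q is irrelevant: its set contains A
    have hsub : A ⊆ P.filter (fun q' => v q < v q' ∧ e q ≤ e q') := by
      intro x hx
      rw [hA, Finset.mem_filter] at hx
      rw [Finset.mem_filter]
      exact ⟨hx.1, by linarith [hx.2.1, hx.2.2], by linarith [hx.2.2]⟩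
    have hqirr : k ≤ (P.filter (fun q' => v q < v q' ∧ e q ≤ e q')).card :=
      le_trans hirr (Finset.card_le_card hsub)
    have := hfirst q hqP hqp hqirr
    rcases this with h | ⟨h1, h2⟩
    · rcases hqlex with h' | ⟨h', _⟩ <;> linarith
    · rcases hqlex with h' | ⟨_, h'⟩ <;> linarith
  have hdisj : Disjoint A B := by
    rw [Finset.disjoint_left]
    intro x hxA hxB
    rw [hA, Finset.mem_filter] at hxA
    rw [hB, Finset.mem_filter] at hxB
    have hvx := hBv x (by rw [hB, Finset.mem_filter]; exact hxB)
    rcases hxB.2 with h | ⟨_, h⟩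
    · linarith [hxA.2.2]
    · linarith
  have hsub : A ∪ B ⊆ P.filter (fun q => v p < v q) := by
    intro x hx
    rw [Finset.mem_union] at hx
    rw [Finset.mem_filter]
    rcases hx with hx | hx
    · rw [hA, Finset.mem_filter] at hx
      exact ⟨hx.1, hx.2.1⟩
    · have := hBv x hx
      rw [hB, Finset.mem_filter] at hx
      exact ⟨hx.1, this⟩
  have hcard : A.card + B.card ≤ (P.filter (fun q => v p < v q)).card := by
    rw [← Finset.card_union_of_disjoint hdisj]
    exact Finset.card_le_card hsub
  omega
end

section
/- Let S and C be disjoint finite sets with functions v : S ∪ C → ℝ and e : S ∪ C → ℝ, where v is injective, and let k ≥ 1. Suppose every p ∈ S is relevant in S, i.e., |{q ∈ S : v(q) > v(p) and e(q) ≥ e(p)}| < k for every p ∈ S. Then every p ∈ S that is irrelevant in S ∪ C, i.e., with |{q ∈ S ∪ C : v(q) > v(p) and e(q) ≥ e(p)}| ≥ k, satisfies v(p) ≤ max_{c ∈ C} v(c) and e(p) ≤ max_{c ∈ C} e(c) (in particular C is nonempty). -/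
/-- Optimized-cleanup lemma: after adding a candidate set `C` to a minimal stock `S`,
every pair of `S` that became irrelevant has similarity at most `max_{c ∈ C} v(c)` and
end time at most `max_{c ∈ C} e(c)` (in particular `C` is nonempty). -/
theorem optimized_cleanup
    {α : Type*} [DecidableEq α] (S C : Finset α) (hSC : Disjoint S C)
    (v e : α → ℝ) (hv : Set.InjOn v ↑(S ∪ C))
    (k : ℕ) (hk : 1 ≤ k)
    (hrel : ∀ p ∈ S, (S.filter (fun q => v p < v q ∧ e p ≤ e q)).card < k) :
    ∀ p ∈ S, k ≤ ((S ∪ C).filter (fun q => v p < v q ∧ e p ≤ e q)).card →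
      ∃ hC : C.Nonempty, v p ≤ C.sup' hC v ∧ e p ≤ C.sup' hC e := by
  intro p hp hirr
  have hsplit : ((S ∪ C).filter (fun q => v p < v q ∧ e p ≤ e q))
      = S.filter (fun q => v p < v q ∧ e p ≤ e q)
        ∪ C.filter (fun q => v p < v q ∧ e p ≤ e q) := Finset.filter_union _ _ _
  have hne : (C.filter (fun q => v p < v q ∧ e p ≤ e q)).Nonempty := by
    rw [← Finset.card_pos]
    by_contra h
    push_neg at h
    have : ((S ∪ C).filter (fun q => v p < v q ∧ e p ≤ e q)).card < k := by
      rw [hsplit]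
      have h1 := Finset.card_union_le (S.filter (fun q => v p < v q ∧ e p ≤ e q))
        (C.filter (fun q => v p < v q ∧ e p ≤ e q))
      have h2 := hrel p hp
      omega
    omega
  obtain ⟨c, hc⟩ := hne
  rw [Finset.mem_filter] at hc
  obtain ⟨hcC, hvc, hec⟩ := hc
  refine ⟨⟨c, hcC⟩, ?_, ?_⟩
  · exact le_trans hvc.le (Finset.le_sup' v hcC)
  · exact le_trans hec (Finset.le_sup' e hcC)
end
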